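/- For b > √3, the hyperbolic edge length ℓ of the cube P(b) with vertices (1/3)(b - √(b²-3))(±1,±1,±1) satisfies cosh ℓ = 1 + 2/(b²-3). -/

import Mathlib

/-- The inverse hyperbolic cosine. -/
noncomputable def arcosh (x : ℝ) : ℝ := Real.log (x + Real.sqrt (x^2 - 1))

/-- The hyperbolic distance between two points of the Poincaré ball model,
given by `cosh d(p,q) = 1 + 2|p-q|²/((1-|p|²)(1-|q|²))`. -/
noncomputable def ballDist (p q : EuclideanSpace ℝ (Fin 3)) : ℝ :=
  arcosh (1 + 2 * dist p q ^ 2 / ((1 - ‖p‖^2) * (1 - ‖q‖^2)))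

/-- A point of `ℝ³` given by its coordinates. -/
noncomputable def v3 (x y z : ℝ) : EuclideanSpace ℝ (Fin 3) :=
  (WithLp.equiv 2 (Fin 3 → ℝ)).symm ![x, y, z]

lemma cosh_arcosh {x : ℝ} (hx : 1 ≤ x) : Real.cosh (arcosh x) = x := by
  have h1 : 0 ≤ x^2 - 1 := by nlinarith
  have hsle : Real.sqrt (x^2-1) ^ 2 = x^2 - 1 := Real.sq_sqrt h1
  have hsn : 0 ≤ Real.sqrt (x^2-1) := Real.sqrt_nonneg _
  have hy : 0 < x + Real.sqrt (x^2-1) := by nlinarith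
  rw [arcosh, Real.cosh_eq, Real.exp_log hy, Real.exp_neg, Real.exp_log hy]
  field_simp
  nlinarith

lemma dist_v3 (x y z x' y' z' : ℝ) :
    dist (v3 x y z) (v3 x' y' z') ^ 2 = (x-x')^2 + (y-y')^2 + (z-z')^2 := by
  rw [EuclideanSpace.dist_eq]
  rw [Real.sq_sqrt (by positivity)]
  simp [v3, Fin.sum_univ_three, Real.dist_eq, sq_abs]

lemma norm_v3 (x y z : ℝ) : ‖v3 x y z‖ ^ 2 = x^2 + y^2 + z^2 := by
  rw [EuclideanSpace.norm_eq, Real.sq_sqrt (by positivity)]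
  simp [v3, Fin.sum_univ_three, sq_abs]

/-- For `b > √3`, the hyperbolic edge length `ℓ` of the cube `P(b)`, i.e. the
hyperbolic distance between the adjacent vertices `(1/3)(b-√(b²-3))(1,1,1)` and
`(1/3)(b-√(b²-3))(1,1,-1)`, satisfies `cosh ℓ = 1 + 2/(b²-3)`. -/
theorem cube_edge_length (b : ℝ) (hb : Real.sqrt 3 < b) :
    Real.cosh (ballDist
      (v3 ((b - Real.sqrt (b^2-3))/3) ((b - Real.sqrt (b^2-3))/3) ((b - Real.sqrt (b^2-3))/3))
      (v3 ((b - Real.sqrt (b^2-3))/3) ((b - Real.sqrt (b^2-3))/3) (-((b - Real.sqrt (b^2-3))/3)))) =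
    1 + 2/(b^2-3) := by
  have h3 : Real.sqrt 3 ^ 2 = 3 := Real.sq_sqrt (by norm_num)
  have hsn3 := Real.sqrt_nonneg (3:ℝ)
  have hbpos : 0 < b := lt_of_le_of_lt hsn3 hb
  have hb2 : (3:ℝ) < b^2 := by nlinarith
  set s := Real.sqrt (b^2-3) with hsdef
  have hs2 : s ^ 2 = b^2 - 3 := Real.sq_sqrt (by linarith)
  have hspos : 0 < s := Real.sqrt_pos.mpr (by linarith)
  have hbs : s < b := by nlinarith
  set t := (b - s)/3 with htdef
  have htpos : 0 < t := div_pos (by linarith) (by norm_num)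
  have hden : 0 < 1 - 3*t^2 := by
    have : (b-s)^2 < 3 := by nlinarith
    simp only [htdef]; nlinarith
  have key : (1:ℝ) + 2 * ((2*t)^2) / ((1 - 3*t^2) * (1 - 3*t^2)) = 1 + 2/(b^2-3) := by
    rw [show b^2 - 3 = s^2 by linarith]
    have h1 : (1 - 3*t^2) * (1 - 3*t^2) ≠ 0 := by positivity
    have hq : 1 - 3*t^2 = 2*s*t := by rw [htdef]; linear_combination (1/3:ℝ)*hs2
    rw [hq]
    congr 1
    rw [div_eq_div_iff (mul_pos (mul_pos (mul_pos two_pos hspos) htpos) (mul_pos (mul_pos two_pos hspos) htpos)).ne' (pow_pos hspos 2).ne']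
    ring
  rw [ballDist, dist_v3, norm_v3, norm_v3]
  have e1 : (t - t)^2 + (t - t)^2 + (t - -t)^2 = (2*t)^2 := by ring
  have e2 : t^2 + t^2 + t^2 = 3*t^2 := by ring
  have e3 : t^2 + t^2 + (-t)^2 = 3*t^2 := by ring
  rw [e1, e2, e3]
  have harg : (1:ℝ) ≤ 1 + 2 * ((2*t)^2) / ((1 - 3*t^2) * (1 - 3*t^2)) := by
    have := div_nonneg (by positivity : (0:ℝ) ≤ 2 * ((2*t)^2)) (le_of_lt (mul_pos hden hden))
    linarith
  rw [cosh_arcosh harg]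
  exact key
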